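/- Let A and P be real d×n matrices with σ = ‖A−P‖/√n, let M be a real d×k matrix with columns M_1,…,M_k, let K be the convex hull of {M_1,…,M_k}, and let δ ∈ (0,1/k] be such that δn is a positive integer. Assume every column P_{·,j} lies in K, and assume the Proximate Latent Points condition: for every ℓ ∈ [k] there exists S_ℓ ⊆ {1,…,n} with |S_ℓ| = δn such that |P_{·,j} − M_ℓ| ≤ 4σ/√δ for all j ∈ S_ℓ. Let K′ be the convex hull of the points A_R over all subsets R ⊆ {1,…,n} with |R| = δn, where A_R is the average of the columns of A indexed by R. Then the Hausdorff distance between K and K′ is at most 5σ/√δ. -/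

import Mathlib

noncomputable def col {d k : ℕ} (M : Matrix (Fin d) (Fin k) ℝ) (ℓ : Fin k) :
    EuclideanSpace ℝ (Fin d) := WithLp.toLp 2 (fun i => M i ℓ)

noncomputable def specNorm {d n : ℕ} (B : Matrix (Fin d) (Fin n) ℝ) : ℝ :=
  ‖LinearMap.toContinuousLinearMap (Matrix.toEuclideanLin B)‖

noncomputable def colAvg {d n : ℕ} (A : Matrix (Fin d) (Fin n) ℝ) (S : Finset (Fin n)) :
    EuclideanSpace ℝ (Fin d) :=
  (S.card : ℝ)⁻¹ • ∑ j ∈ S, col A j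

lemma colAvg_sub_colAvg_norm_le {d n : ℕ} (A P : Matrix (Fin d) (Fin n) ℝ)
    (R : Finset (Fin n)) (hR : R.Nonempty) :
    ‖colAvg A R - colAvg P R‖ ≤ specNorm (A - P) / Real.sqrt R.card := by
  classical
  set m := R.card with hmc
  have hm0 : 0 < m := Finset.card_pos.mpr hR
  have hm0' : (0:ℝ) < m := by exact_mod_cast hm0
  set x : EuclideanSpace ℝ (Fin n) :=
    (WithLp.equiv 2 (Fin n → ℝ)).symm (fun j => if j ∈ R then (m : ℝ)⁻¹ else 0) with hx
  have hxnorm : ‖x‖ = (Real.sqrt m)⁻¹ := by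
    rw [EuclideanSpace.norm_eq]
    have h1 : ∀ i : Fin n, ‖if i ∈ R then (m:ℝ)⁻¹ else 0‖ ^ 2
        = if i ∈ R then ((m:ℝ)⁻¹)^2 else 0 := by
      intro i; split <;> simp [abs_of_nonneg, sq_abs]
    have h2 : ∑ i : Fin n, ‖(if i ∈ R then (m : ℝ)⁻¹ else 0)‖ ^ 2 = (m : ℝ)⁻¹ := by
      rw [Finset.sum_congr rfl (fun i _ => h1 i), Finset.sum_ite_mem, Finset.univ_inter,
        Finset.sum_const, ← hmc, nsmul_eq_mul]
      field_simp
    calc Real.sqrt (∑ i : Fin n, ‖x i‖ ^ 2) = Real.sqrt ((m:ℝ)⁻¹) := by rw [← h2]; rfl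
      _ = (Real.sqrt m)⁻¹ := Real.sqrt_inv m
  set T := LinearMap.toContinuousLinearMap (Matrix.toEuclideanLin (A - P)) with hT
  have hTx : T x = colAvg A R - colAvg P R := by
    show Matrix.toEuclideanLin (A - P) x = _
    ext i
    simp only [Matrix.toEuclideanLin_apply, hx, Equiv.apply_symm_apply, colAvg, col,
      PiLp.sub_apply, PiLp.smul_apply, Finset.sum_apply, smul_eq_mul]
    show ∑ j, (A - P) i j * (if j ∈ R then (m : ℝ)⁻¹ else 0) = _
    rw [Finset.sum_congr rfl (fun j _ => by
      rw [mul_ite, mul_zero] :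
        ∀ j ∈ Finset.univ, (A - P) i j * (if j ∈ R then (m : ℝ)⁻¹ else 0)
          = if j ∈ R then (A - P) i j * (m:ℝ)⁻¹ else 0)]
    rw [Finset.sum_ite_mem, Finset.univ_inter]
    simp only [Matrix.sub_apply]
    rw [Finset.sum_congr rfl (fun j _ => sub_mul _ _ _), Finset.sum_sub_distrib]
    rw [← Finset.sum_mul, ← Finset.sum_mul]
    have hsA : (∑ j ∈ R, col A j) i = ∑ j ∈ R, A i j := by
      rw [WithLp.ofLp_sum, Finset.sum_apply]; rfl
    have hsP : (∑ j ∈ R, col P j) i = ∑ j ∈ R, P i j := by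
      rw [WithLp.ofLp_sum, Finset.sum_apply]; rfl
    erw [hsA, hsP]; rw [← hmc]; ring
  calc ‖colAvg A R - colAvg P R‖ = ‖T x‖ := by rw [hTx]
    _ ≤ ‖T‖ * ‖x‖ := T.le_opNorm x
    _ = specNorm (A - P) / Real.sqrt m := by
        rw [hxnorm, specNorm, div_eq_mul_inv]

theorem stmt2 {d n k : ℕ} (hk : 1 ≤ k)
    (A P : Matrix (Fin d) (Fin n) ℝ) (M : Matrix (Fin d) (Fin k) ℝ)
    (σ δ : ℝ) (hσ : σ = specNorm (A - P) / Real.sqrt n)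
    (hδ0 : 0 < δ) (hδk : δ ≤ 1 / k)
    (m : ℕ) (hm0 : 0 < m) (hm : (m : ℝ) = δ * n)
    (K : Set (EuclideanSpace ℝ (Fin d)))
    (hK : K = convexHull ℝ (Set.range (col M)))
    (hPK : ∀ j : Fin n, col P j ∈ K)
    (hProx : ∀ ℓ : Fin k, ∃ S : Finset (Fin n), S.card = m ∧
      ∀ j ∈ S, ‖col P j - col M ℓ‖ ≤ 4 * σ / Real.sqrt δ)
    (K' : Set (EuclideanSpace ℝ (Fin d)))
    (hK' : K' = convexHull ℝ {x | ∃ R : Finset (Fin n), R.card = m ∧ x = colAvg A R}) :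
    Metric.hausdorffDist K K' ≤ 5 * σ / Real.sqrt δ := by
  classical
  have hn0 : 0 < (n : ℝ) := by
    rcases Nat.eq_zero_or_pos n with h | h
    · exfalso
      rw [h] at hm
      simp at hm
      omega
    · exact_mod_cast h
  have hsd : 0 < Real.sqrt δ := Real.sqrt_pos.mpr hδ0
  have hσ0 : 0 ≤ σ := by
    rw [hσ]; exact div_nonneg (norm_nonneg _) (Real.sqrt_nonneg _)
  have hr0 : 0 ≤ 5 * σ / Real.sqrt δ := by positivity
  have hm0' : (0:ℝ) < m := by exact_mod_cast hm0
  -- spectral bound specialized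
  have key : ∀ R : Finset (Fin n), R.card = m →
      ‖colAvg A R - colAvg P R‖ ≤ σ / Real.sqrt δ := by
    intro R hRc
    have hRne : R.Nonempty := Finset.card_pos.mp (by rw [hRc]; exact hm0)
    have h := colAvg_sub_colAvg_norm_le A P R hRne
    rw [hRc] at h
    refine h.trans_eq ?_
    have h1 : Real.sqrt (m:ℝ) = Real.sqrt δ * Real.sqrt n := by
      rw [hm, Real.sqrt_mul hδ0.le]
    have hsn : 0 < Real.sqrt n := Real.sqrt_pos.mpr hn0
    rw [hσ, h1, div_div, mul_comm]
  -- averages of P-columns lie in K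
  have avgP_mem : ∀ S : Finset (Fin n), S.card = m → colAvg P S ∈ K := by
    intro S hSc
    have h : colAvg P S = ∑ j ∈ S, ((S.card:ℝ))⁻¹ • col P j := by
      rw [colAvg, Finset.smul_sum]
    rw [h, hK]
    refine Convex.sum_mem (convex_convexHull ℝ _) (fun j _ => inv_nonneg.mpr (Nat.cast_nonneg _)) ?_
      (fun j _ => by rw [← hK]; exact hPK j)
    rw [Finset.sum_const, hSc, nsmul_eq_mul]
    field_simp
  -- averages of close points are close
  have avg_close : ∀ (S : Finset (Fin n)) (c : EuclideanSpace ℝ (Fin d)) (r : ℝ),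
      S.card = m → (∀ j ∈ S, ‖col P j - c‖ ≤ r) → ‖colAvg P S - c‖ ≤ r := by
    intro S c r hSc h
    have hSne : S.Nonempty := Finset.card_pos.mp (by rw [hSc]; exact hm0)
    have hScR : (S.card : ℝ) = (m : ℝ) := by exact_mod_cast hSc
    have hc0 : (S.card:ℝ) ≠ 0 := by rw [hScR]; exact hm0'.ne'
    have hd : colAvg P S - c = (S.card:ℝ)⁻¹ • ∑ j ∈ S, (col P j - c) := by
      rw [Finset.sum_sub_distrib, smul_sub, colAvg, Finset.sum_const,
        ← Nat.cast_smul_eq_nsmul ℝ, smul_smul, inv_mul_cancel₀ hc0, one_smul]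
    calc ‖colAvg P S - c‖ = (S.card:ℝ)⁻¹ * ‖∑ j ∈ S, (col P j - c)‖ := by
          rw [hd, norm_smul, Real.norm_eq_abs, abs_of_nonneg (by positivity)]
      _ ≤ (S.card:ℝ)⁻¹ * ∑ j ∈ S, ‖col P j - c‖ := by
          gcongr
          exact norm_sum_le _ _
      _ ≤ (S.card:ℝ)⁻¹ * ∑ j ∈ S, r := by
          gcongr with j hj
          exact h j hj
      _ = r := by
          rw [Finset.sum_const, nsmul_eq_mul, hScR]
          field_simp
  -- hull distance helper
  have hull_infDist : ∀ (s t : Set (EuclideanSpace ℝ (Fin d))) (r : ℝ), 0 ≤ r →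
      t.Nonempty → Convex ℝ t → (∀ x ∈ s, ∃ y ∈ t, dist x y ≤ r) →
      ∀ x ∈ convexHull ℝ s, Metric.infDist x t ≤ r := by
    intro s t r hr htne hconv h x hx
    have hsub : s ⊆ Metric.cthickening r t := fun z hz => by
      obtain ⟨y, hy, hdz⟩ := h z hz
      exact Metric.mem_cthickening_of_dist_le z y r t hy hdz
    have h2 := (convexHull_min hsub (hconv.cthickening r)) hx
    rw [Metric.mem_cthickening_iff] at h2
    exact ENNReal.toReal_le_of_le_ofReal hr h2
  -- nonemptiness
  obtain ⟨S0, hS0c, _⟩ := hProx ⟨0, hk⟩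
  have hK'ne : K'.Nonempty := ⟨colAvg A S0, by
    rw [hK']; exact subset_convexHull ℝ _ ⟨S0, hS0c, rfl⟩⟩
  have hKne : K.Nonempty := ⟨col M ⟨0, hk⟩, by
    rw [hK]; exact subset_convexHull ℝ _ ⟨⟨0, hk⟩, rfl⟩⟩
  have hKconv : Convex ℝ K := by rw [hK]; exact convex_convexHull ℝ _
  have hK'conv : Convex ℝ K' := by rw [hK']; exact convex_convexHull ℝ _
  apply Metric.hausdorffDist_le_of_infDist hr0
  · intro x hx
    rw [hK] at hx
    refine hull_infDist _ _ _ hr0 hK'ne hK'conv ?_ x hx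
    rintro _ ⟨ℓ, rfl⟩
    obtain ⟨S, hSc, hSd⟩ := hProx ℓ
    refine ⟨colAvg A S, by rw [hK']; exact subset_convexHull ℝ _ ⟨S, hSc, rfl⟩, ?_⟩
    have h1 : ‖colAvg P S - col M ℓ‖ ≤ 4 * σ / Real.sqrt δ := avg_close S _ _ hSc hSd
    have h2 := key S hSc
    calc dist (col M ℓ) (colAvg A S) = ‖colAvg A S - col M ℓ‖ := by
          rw [dist_eq_norm, ← norm_neg]; congr 1; abel
      _ ≤ ‖colAvg A S - colAvg P S‖ + ‖colAvg P S - col M ℓ‖ := by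
          have : colAvg A S - col M ℓ = (colAvg A S - colAvg P S) + (colAvg P S - col M ℓ) := by
            abel
          rw [this]; exact norm_add_le _ _
      _ ≤ σ / Real.sqrt δ + 4 * σ / Real.sqrt δ := add_le_add h2 h1
      _ = 5 * σ / Real.sqrt δ := by ring
  · intro x hx
    rw [hK'] at hx
    refine hull_infDist _ _ _ hr0 hKne hKconv ?_ x hx
    rintro _ ⟨R, hRc, rfl⟩
    refine ⟨colAvg P R, avgP_mem R hRc, ?_⟩
    rw [dist_eq_norm]
    refine (key R hRc).trans ?_
    rw [div_le_div_iff₀ hsd hsd]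
    nlinarith [Real.sq_sqrt hδ0.le, hsd]
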